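/- arXiv:2102.13572 — 3 statements merged into one kernel-verified Lean document; each statement's English description precedes it below -/
import Mathlib

section
/- With φ : A ⋊ B → H × C as above, the intersection of the full diagonal Δ_C = {(c,c) : c ∈ C} ≤ H × C (using C ≤ H) with φ(A ⋊ B) equals the diagonal Δ_{θ(B)} = {(θ(b), θ(b)) : b ∈ B}. -/
/-- With `ψ : A ⋊ B → H × C`, `a·b ↦ (a·b, θ(b))`, as above,
the intersection of the full diagonal `Δ_C = {(c, c) : c ∈ C} ≤ H × C`
(using the embedding `j : C → H`) with `ψ(A ⋊ B)` equals the diagonal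
`Δ_{θ(B)} = {(θ(b), θ(b)) : b ∈ B}`. -/
theorem diagonal_inter_image_eq_diagonal_thetaB
    {A B C H : Type*} [Group A] [Group B] [Group C] [Group H]
    (φ : B →* MulAut A) (θ : B →* C) (hθ : Function.Injective θ)
    (i : A ⋊[φ] B →* H) (j : C →* H)
    (hi : Function.Injective i) (hj : Function.Injective j)
    (hamalg : i.comp SemidirectProduct.inr = j.comp θ)
    (ψ : (A ⋊[φ] B) →* H × C)
    (hψ : ψ = MonoidHom.prod i (θ.comp SemidirectProduct.rightHom)) :
    (MonoidHom.prod j (MonoidHom.id C)).range ⊓ ψ.range =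
      (MonoidHom.prod (j.comp θ) θ).range := by
  subst hψ
  ext x
  simp only [Subgroup.mem_inf, MonoidHom.mem_range, MonoidHom.prod_apply,
    MonoidHom.id_apply, MonoidHom.coe_comp, Function.comp_apply]
  constructor
  · rintro ⟨⟨c, hc⟩, g, hg⟩
    refine ⟨g.right, ?_⟩
    obtain ⟨h1, h2⟩ := Prod.mk.injEq .. ▸ hg
    obtain ⟨h3, h4⟩ := Prod.mk.injEq .. ▸ hc
    have hc' : c = θ (SemidirectProduct.rightHom g) := h4.trans h2.symm
    have key := DFunLike.congr_fun hamalg (SemidirectProduct.rightHom g)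
    simp only [MonoidHom.coe_comp, Function.comp_apply] at key
    have : i g = i (SemidirectProduct.inr (SemidirectProduct.rightHom g)) := by
      rw [key, h1, ← h3, hc']
    have hg' : g = SemidirectProduct.inr (SemidirectProduct.rightHom g) := hi this
    rw [← hg, hg']
    simp [Prod.ext_iff, key.symm]
    exact (DFunLike.congr_fun hamalg g.right).symm
  · rintro ⟨b, hb⟩
    have key := DFunLike.congr_fun hamalg b
    simp only [MonoidHom.coe_comp, Function.comp_apply] at key
    constructor
    · exact ⟨θ b, hb⟩
    · refine ⟨SemidirectProduct.inr b, ?_⟩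
      rw [← hb]
      simp [key]
end

section
/- Let G = BS(1,2) = ⟨a,t | t a t⁻¹ = a²⟩ and consider the subgroup K = ⟨(a,1), (t,t)⟩ of G × ⟨t⟩ ≅ G × ℤ. Then the intersection (G × 1) ∩ K is strictly larger than ⟨(a,1)⟩; in fact it equals the normal closure of (a,1) in K and is not finitely generated. -/
/-- Relator of `BS(1,2) = ⟨a, t ∣ t a t⁻¹ = a²⟩`, with `a` the generator `0` and `t` the
generator `1` of the free group on two letters. -/
def bsRels : Set (FreeGroup (Fin 2)) :=
  {FreeGroup.of 1 * FreeGroup.of 0 * (FreeGroup.of 1)⁻¹ *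
    (FreeGroup.of 0 * FreeGroup.of 0)⁻¹}

/-- The Baumslag–Solitar group `BS(1,2)`. -/
def BS12 : Type := PresentedGroup bsRels

instance : Group BS12 := by unfold BS12; infer_instance

/-- The generator `a` of `BS(1,2)`. -/
def bsA : BS12 := PresentedGroup.of 0

/-- The generator `t` of `BS(1,2)`. -/
def bsT : BS12 := PresentedGroup.of 1

/-- The subgroup `K = ⟨(a,1), (t,t)⟩` of `G × ℤ`, `G = BS(1,2)` (the second factor `ℤ`
is written multiplicatively, generated by `t`). -/
def bsK : Subgroup (BS12 × Multiplicative ℤ) :=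
  Subgroup.closure {(bsA, 1), (bsT, Multiplicative.ofAdd 1)}

/-- The subgroup `G × 1` of `G × ℤ`. -/
def bsGfac : Subgroup (BS12 × Multiplicative ℤ) :=
  (⊤ : Subgroup BS12).prod (⊥ : Subgroup (Multiplicative ℤ))

namespace BSaux

def chi : BS12 →* Multiplicative ℤ :=
  PresentedGroup.toGroup (f := ![(1 : Multiplicative ℤ), Multiplicative.ofAdd 1]) (by
    rintro r hr
    rw [bsRels, Set.mem_singleton_iff] at hr
    subst hr
    simp [FreeGroup.lift_apply_of])

lemma chi_A : chi bsA = 1 := PresentedGroup.toGroup.of _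
lemma chi_T : chi bsT = Multiplicative.ofAdd 1 := PresentedGroup.toGroup.of _

lemma mulLeft₀_two_inv_apply (y : ℚ) :
    (Equiv.mulLeft₀ (2:ℚ) two_ne_zero)⁻¹ y = y / 2 := by
  rw [Equiv.Perm.inv_def, Equiv.symm_apply_eq, Equiv.mulLeft₀_apply]; ring

def rho : BS12 →* Equiv.Perm ℚ :=
  PresentedGroup.toGroup (f := ![Equiv.addRight (1 : ℚ), Equiv.mulLeft₀ (2:ℚ) two_ne_zero]) (by
    rintro r hr
    rw [bsRels, Set.mem_singleton_iff] at hr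
    subst hr
    simp only [map_mul, map_inv, FreeGroup.lift_apply_of]
    ext x
    simp [Equiv.Perm.mul_apply, mulLeft₀_two_inv_apply]
    ring)

lemma rho_A : rho bsA = Equiv.addRight (1:ℚ) := PresentedGroup.toGroup.of _
lemma rho_T : rho bsT = Equiv.mulLeft₀ (2:ℚ) two_ne_zero := PresentedGroup.toGroup.of _

lemma rho_A_apply (x : ℚ) : rho bsA x = x + 1 := by rw [rho_A]; simp
lemma rho_T_apply (x : ℚ) : rho bsT x = 2 * x := by rw [rho_T]; simp
lemma rho_T_inv_apply (x : ℚ) : (rho bsT)⁻¹ x = x / 2 := by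
  rw [rho_T, mulLeft₀_two_inv_apply]

lemma top_closure : Subgroup.closure ({bsA, bsT} : Set BS12) = ⊤ := by
  have h := PresentedGroup.closure_range_of bsRels
  have heq : Set.range (PresentedGroup.of : Fin 2 → PresentedGroup bsRels)
      = ({bsA, bsT} : Set BS12) := by
    ext g
    constructor
    · rintro ⟨i, rfl⟩
      fin_cases i
      · exact Or.inl rfl
      · exact Or.inr rfl
    · rintro (rfl | rfl)
      · exact ⟨0, rfl⟩
      · exact ⟨1, rfl⟩
  rw [← heq]
  exact h

lemma affine (g : BS12) (x : ℚ) :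
    rho g x = (2:ℚ) ^ (Multiplicative.toAdd (chi g)) * x + rho g 0 := by
  have hg : g ∈ Subgroup.closure ({bsA, bsT} : Set BS12) := by
    rw [top_closure]; trivial
  induction hg using Subgroup.closure_induction generalizing x with
  | mem g hg =>
    rcases hg with rfl | rfl
    · simp [rho_A_apply, chi_A]
    · simp [rho_T_apply, chi_T]
  | one => simp
  | mul g h _ _ ihg ihh =>
    simp only [map_mul, Equiv.Perm.mul_apply]
    rw [ihg (rho h x), ihg (rho h 0), ihh x, toAdd_mul, zpow_add₀ (two_ne_zero (α := ℚ))]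
    ring
  | inv g hgmem ihg =>
    have h1 : rho g (rho g⁻¹ x) = x := by rw [map_inv, ← Equiv.Perm.mul_apply, mul_inv_cancel, Equiv.Perm.one_apply]
    have h0 : rho g (rho g⁻¹ 0) = 0 := by rw [map_inv, ← Equiv.Perm.mul_apply, mul_inv_cancel, Equiv.Perm.one_apply]
    rw [ihg] at h1 h0
    have h2 : (2:ℚ) ^ (Multiplicative.toAdd (chi g)) ≠ 0 := by positivity
    simp only [map_inv, toAdd_inv, zpow_neg] at h1 h0 ⊢
    field_simp at h1 h0 ⊢
    linarith

/-! ### Product-level setup -/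

abbrev GZ := BS12 × Multiplicative ℤ

def xx : GZ := (bsA, 1)
def yy : GZ := (bsT, Multiplicative.ofAdd 1)

lemma bsK_eq : bsK = Subgroup.closure {xx, yy} := rfl

lemma mem_gfac (p : GZ) : p ∈ bsGfac ↔ p.2 = 1 := by
  simp [bsGfac, Subgroup.mem_prod, Subgroup.mem_bot]

lemma xx_mem_K : xx ∈ bsK := Subgroup.subset_closure (Set.mem_insert _ _)
lemma yy_mem_K : yy ∈ bsK :=
  Subgroup.subset_closure (Set.mem_insert_of_mem _ rfl)

lemma chiK (p : GZ) (hp : p ∈ bsK) : chi p.1 = p.2 := by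
  have h : Set.EqOn (chi.comp (MonoidHom.fst BS12 (Multiplicative ℤ)))
      (MonoidHom.snd BS12 (Multiplicative ℤ)) ({xx, yy} : Set GZ) := by
    rintro q hq
    simp only [Set.mem_insert_iff, Set.mem_singleton_iff] at hq
    rcases hq with rfl | rfl
    · simpa [xx] using chi_A
    · simpa [yy] using chi_T
  exact MonoidHom.eqOn_closure h hp

lemma chi_of_memN (p : GZ) (hp : p ∈ bsGfac ⊓ bsK) : chi p.1 = 1 :=
  (chiK p hp.2).trans ((mem_gfac p).1 hp.1)

def ff (p : GZ) : ℚ := rho p.1 0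

lemma ff_one : ff (1 : GZ) = 0 := by simp [ff]

lemma ff_mul (p q : GZ) (hp : chi p.1 = 1) : ff (p * q) = ff p + ff q := by
  have h1 : (p * q).1 = p.1 * q.1 := rfl
  simp only [ff, h1, map_mul, Equiv.Perm.mul_apply]
  rw [affine p.1, hp]
  simp [add_comm]

lemma ff_inv (p : GZ) (hp : chi p.1 = 1) : ff p⁻¹ = - ff p := by
  have h0 : rho p.1 ((rho p.1)⁻¹ 0) = 0 := by simp
  rw [affine p.1, hp] at h0
  simp only [toAdd_one, zpow_zero, one_mul] at h0
  have h1 : (p⁻¹).1 = p.1⁻¹ := rfl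
  simp only [ff, h1, map_inv]
  linarith

def TD (D : ℚ) : AddSubgroup ℚ where
  carrier := {q | ∃ j : ℤ, q * D = (j : ℚ)}
  zero_mem' := ⟨0, by simp⟩
  add_mem' := by
    rintro a b ⟨j, hj⟩ ⟨j', hj'⟩
    exact ⟨j + j', by push_cast; rw [add_mul, hj, hj']⟩
  neg_mem' := by
    rintro a ⟨j, hj⟩
    exact ⟨-j, by push_cast; rw [neg_mul, hj]⟩

def MT (T : AddSubgroup ℚ) : Subgroup GZ where
  carrier := {p | p ∈ bsGfac ⊓ bsK ∧ ff p ∈ T}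
  one_mem' := ⟨one_mem _, by rw [ff_one]; exact T.zero_mem⟩
  mul_mem' := by
    rintro p q hp hq
    exact ⟨mul_mem hp.1 hq.1, by
      rw [ff_mul p q (chi_of_memN p hp.1)]; exact T.add_mem hp.2 hq.2⟩
  inv_mem' := by
    rintro p hp
    exact ⟨inv_mem hp.1, by
      rw [ff_inv p (chi_of_memN p hp.1)]; exact T.neg_mem hp.2⟩

lemma rho_T_zpow (m : ℤ) (x : ℚ) : rho (bsT ^ m) x = 2 ^ m * x := by
  induction m using Int.induction_on generalizing x with
  | zero => simp
  | succ n ih =>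
    rw [zpow_add_one, map_mul, Equiv.Perm.mul_apply, rho_T_apply, ih,
      zpow_add₀ (two_ne_zero (α := ℚ))]
    ring
  | pred n ih =>
    rw [zpow_sub_one, map_mul, map_inv, Equiv.Perm.mul_apply, rho_T_inv_apply, ih,
      zpow_sub_one₀ (two_ne_zero (α := ℚ))]
    ring

def zz (k : ℕ) : GZ := yy ^ (-(k : ℤ)) * xx * yy ^ (k : ℤ)

lemma zz_mem (k : ℕ) : zz k ∈ bsGfac ⊓ bsK := by
  rw [Subgroup.mem_inf]
  constructor
  · rw [mem_gfac]
    have h2 : ∀ m : ℤ, (yy ^ m).2 = Multiplicative.ofAdd m := by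
      intro m
      have := map_zpow (MonoidHom.snd BS12 (Multiplicative ℤ)) yy m
      simpa [yy, ← ofAdd_zsmul] using this
    have : (zz k).2 = (yy ^ (-(k:ℤ))).2 * xx.2 * (yy ^ (k:ℤ)).2 := rfl
    rw [this, h2, h2]
    simp [xx, ← ofAdd_add]
  · exact mul_mem (mul_mem (zpow_mem yy_mem_K _) xx_mem_K) (zpow_mem yy_mem_K _)

lemma fst_zz (k : ℕ) : (zz k).1 = bsT ^ (-(k:ℤ)) * bsA * bsT ^ (k:ℤ) := by
  have h1 : ∀ m : ℤ, (yy ^ m).1 = bsT ^ m := by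
    intro m
    simpa [yy] using map_zpow (MonoidHom.fst BS12 (Multiplicative ℤ)) yy m
  have : (zz k).1 = (yy ^ (-(k:ℤ))).1 * xx.1 * (yy ^ (k:ℤ)).1 := rfl
  rw [this, h1, h1]; rfl

lemma ff_zz (k : ℕ) : ff (zz k) = 2 ^ (-(k:ℤ)) := by
  rw [ff, fst_zz, map_mul, map_mul, Equiv.Perm.mul_apply, Equiv.Perm.mul_apply,
    rho_T_zpow ((k:ℤ)) 0, mul_zero, rho_A_apply, zero_add, rho_T_zpow, mul_one]

lemma xx_mem_N : xx ∈ bsGfac ⊓ bsK := ⟨(mem_gfac xx).2 rfl, xx_mem_K⟩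

lemma ff_xx : ff xx = 1 := by
  rw [ff]
  show rho bsA 0 = 1
  rw [rho_A_apply]; norm_num

/-! ### The normal closure of `xx` in `bsK` -/

def conjS : Set GZ := {x | ∃ k ∈ bsK, x = k * xx * k⁻¹}

lemma conj_mem_C (k : GZ) (hk : k ∈ bsK) (c : GZ) (hc : c ∈ Subgroup.closure conjS) :
    k * c * k⁻¹ ∈ Subgroup.closure conjS := by
  induction hc using Subgroup.closure_induction with
  | mem c hcs =>
    obtain ⟨k', hk', rfl⟩ := hcs
    exact Subgroup.subset_closure ⟨k * k', mul_mem hk hk', by group⟩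
  | one => simpa using one_mem (Subgroup.closure conjS)
  | mul c d _ _ ihc ihd =>
    have h := mul_mem ihc ihd
    convert h using 1
    group
  | inv c _ ihc =>
    have h := inv_mem ihc
    convert h using 1
    group

lemma K_decomp (p : GZ) (hp : p ∈ bsK) :
    p * yy ^ (-(Multiplicative.toAdd p.2)) ∈ Subgroup.closure conjS := by
  rw [bsK_eq] at hp
  induction hp using Subgroup.closure_induction with
  | mem q hq =>
    simp only [Set.mem_insert_iff, Set.mem_singleton_iff] at hq
    rcases hq with rfl | rfl
    · have h : xx * yy ^ (-(Multiplicative.toAdd xx.2)) = xx := by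
        show xx * yy ^ (-(Multiplicative.toAdd (1 : Multiplicative ℤ))) = xx
        simp
      rw [h]
      exact Subgroup.subset_closure ⟨1, one_mem _, by simp⟩
    · have h : yy * yy ^ (-(Multiplicative.toAdd yy.2)) = 1 := by
        show yy * yy ^ (-(Multiplicative.toAdd (Multiplicative.ofAdd (1:ℤ)))) = 1
        simp
      rw [h]
      exact one_mem _
  | one => simpa using one_mem (Subgroup.closure conjS)
  | mul p q hpm hqm ihp ihq =>
    have key : (p * q) * yy ^ (-(Multiplicative.toAdd (p * q).2)) =
        (p * (q * yy ^ (-(Multiplicative.toAdd q.2))) * p⁻¹) *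
          (p * yy ^ (-(Multiplicative.toAdd p.2))) := by
      have h2 : (p * q).2 = p.2 * q.2 := rfl
      rw [h2, toAdd_mul]
      group
    rw [key]
    exact mul_mem (conj_mem_C p (bsK_eq ▸ hpm) _ ihq) ihp
  | inv p hpm ihp =>
    have key : p⁻¹ * yy ^ (-(Multiplicative.toAdd (p⁻¹).2)) =
        p⁻¹ * (p * yy ^ (-(Multiplicative.toAdd p.2)))⁻¹ * (p⁻¹)⁻¹ := by
      have h2 : (p⁻¹).2 = (p.2)⁻¹ := rfl
      rw [h2, toAdd_inv]
      group
    rw [key]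
    exact conj_mem_C p⁻¹ (inv_mem (bsK_eq ▸ hpm)) _ (inv_mem ihp)

lemma N_eq_C : bsGfac ⊓ bsK = Subgroup.closure conjS := by
  apply le_antisymm
  · intro p hp
    have h2 : p.2 = 1 := (mem_gfac p).1 ((Subgroup.mem_inf.1 hp).1)
    have h := K_decomp p (Subgroup.mem_inf.1 hp).2
    rw [h2] at h
    simpa using h
  · rw [Subgroup.closure_le]
    rintro x ⟨k, hk, rfl⟩
    have h2 : (k * xx * k⁻¹).2 = k.2 * xx.2 * (k.2)⁻¹ := rfl
    refine Subgroup.mem_inf.2 ⟨(mem_gfac _).2 ?_, mul_mem (mul_mem hk xx_mem_K) (inv_mem hk)⟩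
    rw [h2]
    show k.2 * 1 * (k.2)⁻¹ = 1
    group

lemma part1 : Subgroup.closure ({xx} : Set GZ) < bsGfac ⊓ bsK := by
  rw [SetLike.lt_iff_le_and_exists]
  refine ⟨(Subgroup.closure_le _).2 (Set.singleton_subset_iff.2 xx_mem_N), zz 1, zz_mem 1, ?_⟩
  intro hmem
  have hle : Subgroup.closure ({xx} : Set GZ) ≤ MT (TD 1) :=
    (Subgroup.closure_le _).2 (Set.singleton_subset_iff.2 ⟨xx_mem_N, ⟨1, by rw [ff_xx]; norm_num⟩⟩)
  obtain ⟨j, hj⟩ := (hle hmem).2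
  rw [ff_zz] at hj
  have h1 : (2:ℚ) * j = 1 := by
    rw [← hj]
    norm_num
  have h2 : (2 * j : ℤ) = 1 := by exact_mod_cast h1
  omega

lemma part3 : ¬ (bsGfac ⊓ bsK).FG := by
  rintro ⟨S, hS⟩
  classical
  set D : ℚ := ∏ s ∈ S, ((ff s).den : ℚ) with hD
  have hDpos : 0 < D := Finset.prod_pos (fun s _ => by exact_mod_cast (ff s).pos)
  have hSsub : (↑S : Set GZ) ⊆ (MT (TD D) : Set GZ) := by
    intro s hs
    refine ⟨?_, ?_⟩
    · rw [← hS]; exact Subgroup.subset_closure hs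
    · refine ⟨(ff s).num * ∏ x ∈ S.erase s, ((ff x).den : ℤ), ?_⟩
      have hDo : D = ((ff s).den : ℚ) * ∏ x ∈ S.erase s, ((ff x).den : ℚ) :=
        (Finset.mul_prod_erase S _ hs).symm
      have hden0 : ((ff s).den : ℚ) ≠ 0 := by exact_mod_cast (ff s).den_nz
      have hq : (ff s) * ((ff s).den : ℚ) = ((ff s).num : ℚ) := by
        nth_rewrite 1 [← Rat.num_div_den (ff s)]
        exact div_mul_cancel₀ _ hden0
      rw [hDo, ← mul_assoc, hq]
      push_cast
      ring
  have hle : bsGfac ⊓ bsK ≤ MT (TD D) := by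
    rw [← hS]; exact (Subgroup.closure_le _).2 hSsub
  obtain ⟨k, hk⟩ := pow_unbounded_of_one_lt D (one_lt_two (α := ℚ))
  obtain ⟨j, hj⟩ := (hle (zz_mem k)).2
  rw [ff_zz] at hj
  have h2k : (0:ℚ) < 2 ^ k := by positivity
  have hD2 : D = (j:ℚ) * 2 ^ k := by
    have e : (2:ℚ) ^ (-(k:ℤ)) = ((2:ℚ) ^ k)⁻¹ := by rw [zpow_neg, zpow_natCast]
    rw [e] at hj
    field_simp at hj
    linarith
  have hjpos : (0:ℤ) < j := by
    by_contra h
    push_neg at h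
    have : (j:ℚ) ≤ 0 := by exact_mod_cast h
    nlinarith
  have hj1 : (1:ℚ) ≤ (j:ℚ) := by exact_mod_cast hjpos
  nlinarith

end BSaux

/-- For `G = BS(1,2)` and `K = ⟨(a,1), (t,t)⟩ ≤ G × ℤ`, the intersection
`(G × 1) ∩ K` is strictly larger than `⟨(a,1)⟩`; in fact it equals the normal closure of
`(a,1)` in `K` (the subgroup generated by all `K`-conjugates of `(a,1)`) and it is not
finitely generated. -/
theorem BS12_factor_inter_K :
    Subgroup.closure ({((bsA, 1) : BS12 × Multiplicative ℤ)}) < bsGfac ⊓ bsK ∧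
    bsGfac ⊓ bsK =
      Subgroup.closure
        {x : BS12 × Multiplicative ℤ | ∃ k ∈ bsK, x = k * (bsA, 1) * k⁻¹} ∧
    ¬ (bsGfac ⊓ bsK).FG :=
  ⟨BSaux.part1, BSaux.N_eq_C, BSaux.part3⟩
end

section
/- Let φ be the automorphism of the free group F_k given by φ(x₁)=x₁ and φ(x_i)=x₁x₂⋯x_i for 2 ≤ i ≤ k. Then for each 1 ≤ i ≤ k the word length of φⁿ(x_i) with respect to the generators {x₁,…,x_k} grows polynomially of degree exactly i−1 in n; in particular |φⁿ(x₁)| = 1 for all n, and |φⁿ(x_i)| is bounded above and below by positive constant multiples of n^{i−1}. -/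
/-- The automorphism `φ` of the free group on `x₁, …, x_k` (indexed by `Fin k`, so the
generator indexed by `i : Fin k` is `x_{i+1}`) with `φ(x₁) = x₁` and
`φ(x_i) = x₁ x₂ ⋯ x_i` for `i ≥ 2`. -/
def polyPhi (k : ℕ) : FreeGroup (Fin k) →* FreeGroup (Fin k) :=
  FreeGroup.lift (fun i =>
    (((List.finRange k).filter (fun j => j ≤ i)).map FreeGroup.of).prod)

namespace PolyPhiGrowth

variable {k : ℕ}

lemma polyPhi_of (i : Fin k) :
    polyPhi k (FreeGroup.of i) =
      (((List.finRange k).filter (fun j => j ≤ i)).map FreeGroup.of).prod :=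
  FreeGroup.lift_apply_of

lemma iter_prod (n : ℕ) (L : List (FreeGroup (Fin k))) :
    (⇑(polyPhi k))^[n] L.prod = (L.map ((⇑(polyPhi k))^[n])).prod := by
  induction L with
  | nil => simpa using iterate_map_one (polyPhi k) n
  | cons a L ih =>
      simp only [List.prod_cons, List.map_cons, iterate_map_mul, ih]

lemma iter_succ_of (n : ℕ) (i : Fin k) :
    (⇑(polyPhi k))^[n + 1] (FreeGroup.of i) =
      (((List.finRange k).filter (fun j => j ≤ i)).map
        (fun j => (⇑(polyPhi k))^[n] (FreeGroup.of j))).prod := by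
  rw [Function.iterate_succ_apply, polyPhi_of, iter_prod, List.map_map]
  rfl

lemma filter_map_sum {M : Type*} [AddCommMonoid M] (i : Fin k) (f : Fin k → M) :
    (((List.finRange k).filter (fun j => j ≤ i)).map f).sum =
      ∑ j ∈ Finset.Iic i, f j := by
  rw [← List.sum_toFinset f ((List.nodup_finRange k).filter _),
    List.toFinset_filter, List.toFinset_finRange]
  congr 1
  ext j
  simp

lemma sum_Iic_choose (n : ℕ) (i : Fin k) :
    ∑ j ∈ Finset.Iic i, (n + (j : ℕ)).choose (j : ℕ) =
      (n + 1 + (i : ℕ)).choose (i : ℕ) := by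
  have h1 : ∑ j ∈ Finset.Iic i, (n + (j : ℕ)).choose (j : ℕ)
      = ∑ m ∈ Finset.Iic (i : ℕ), (n + m).choose m := by
    rw [← Fin.map_valEmbedding_Iic, Finset.sum_map]
    rfl
  have h2 : ∑ m ∈ Finset.Iic (i : ℕ), (n + m).choose m
      = ∑ t ∈ Finset.Icc n (n + (i : ℕ)), t.choose n := by
    refine Finset.sum_nbij' (fun m => n + m) (fun t => t - n) ?_ ?_ ?_ ?_ ?_
    · intro m hm; simp only [Finset.mem_Iic] at hm; simp [Finset.mem_Icc]; omega
    · intro t ht; simp only [Finset.mem_Icc] at ht; simp [Finset.mem_Iic]; omega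
    · intro m _; show n + m - n = m; omega
    · intro t ht; simp only [Finset.mem_Icc] at ht; show n + (t - n) = t; omega
    · intro m _; exact Nat.choose_symm_add.symm
  rw [h1, h2, Nat.sum_Icc_choose]
  rw [show n + (i : ℕ) + 1 = (n + 1) + (i : ℕ) by omega]
  exact Nat.choose_symm_add

lemma norm_prod_le (L : List (FreeGroup (Fin k))) :
    FreeGroup.norm L.prod ≤ (L.map FreeGroup.norm).sum := by
  induction L with
  | nil => simp [FreeGroup.norm_one]
  | cons a L ih =>
      simp only [List.prod_cons, List.map_cons, List.sum_cons]
      exact le_trans (FreeGroup.norm_mul_le _ _) (by omega)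

lemma norm_iter_le (n : ℕ) : ∀ i : Fin k,
    FreeGroup.norm ((⇑(polyPhi k))^[n] (FreeGroup.of i)) ≤ (n + (i : ℕ)).choose (i : ℕ) := by
  induction n with
  | zero => intro i; simp [FreeGroup.norm_of]
  | succ n ih =>
      intro i
      rw [iter_succ_of]
      refine le_trans (norm_prod_le _) ?_
      rw [List.map_map]
      have := filter_map_sum (i := i)
        (f := fun j => FreeGroup.norm ((⇑(polyPhi k))^[n] (FreeGroup.of j)))
      rw [show (FreeGroup.norm ∘ fun j => (⇑(polyPhi k))^[n] (FreeGroup.of j)) =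
        fun j => FreeGroup.norm ((⇑(polyPhi k))^[n] (FreeGroup.of j)) from rfl, this]
      calc ∑ j ∈ Finset.Iic i, FreeGroup.norm ((⇑(polyPhi k))^[n] (FreeGroup.of j))
          ≤ ∑ j ∈ Finset.Iic i, (n + (j : ℕ)).choose (j : ℕ) :=
            Finset.sum_le_sum fun j _ => ih j
        _ = (n + 1 + (i : ℕ)).choose (i : ℕ) := sum_Iic_choose n i

/-- The exponent-sum homomorphism. -/
def expSum (k : ℕ) : FreeGroup (Fin k) →* Multiplicative ℤ :=
  FreeGroup.lift fun _ => Multiplicative.ofAdd 1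

lemma expSum_mk_le (L : List (Fin k × Bool)) :
    Multiplicative.toAdd (expSum k (FreeGroup.mk L)) ≤ (L.length : ℤ) := by
  rw [expSum, FreeGroup.lift_mk]
  induction L with
  | nil => simp
  | cons a L ih =>
      simp only [List.map_cons, List.prod_cons, toAdd_mul, List.length_cons]
      have h : Multiplicative.toAdd (cond a.2 (Multiplicative.ofAdd (1 : ℤ))
          (Multiplicative.ofAdd (1 : ℤ))⁻¹) ≤ 1 := by
        cases a.2 <;> simp
      push_cast
      linarith

lemma toAdd_expSum_le_norm (w : FreeGroup (Fin k)) :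
    Multiplicative.toAdd (expSum k w) ≤ (FreeGroup.norm w : ℤ) := by
  have := expSum_mk_le (k := k) w.toWord
  rwa [FreeGroup.mk_toWord] at this

lemma toAdd_list_prod (L : List (Multiplicative ℤ)) :
    Multiplicative.toAdd L.prod = (L.map Multiplicative.toAdd).sum := by
  induction L with
  | nil => rfl
  | cons a L ih => simp [ih]

lemma expSum_iter (n : ℕ) : ∀ i : Fin k,
    Multiplicative.toAdd (expSum k ((⇑(polyPhi k))^[n] (FreeGroup.of i))) =
      (((n + (i : ℕ)).choose (i : ℕ) : ℤ)) := by
  induction n with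
  | zero =>
      intro i
      simp [expSum, FreeGroup.lift_apply_of]
  | succ n ih =>
      intro i
      rw [iter_succ_of, map_list_prod, List.map_map, toAdd_list_prod, List.map_map]
      have := filter_map_sum (i := i)
        (f := fun j => Multiplicative.toAdd (expSum k ((⇑(polyPhi k))^[n] (FreeGroup.of j))))
      rw [show (Multiplicative.toAdd ∘ ⇑(expSum k) ∘ fun j =>
          (⇑(polyPhi k))^[n] (FreeGroup.of j)) =
        fun j => Multiplicative.toAdd (expSum k ((⇑(polyPhi k))^[n] (FreeGroup.of j)))
          from rfl, this]
      calc ∑ j ∈ Finset.Iic i,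
            Multiplicative.toAdd (expSum k ((⇑(polyPhi k))^[n] (FreeGroup.of j)))
          = ∑ j ∈ Finset.Iic i, (((n + (j : ℕ)).choose (j : ℕ) : ℤ)) :=
            Finset.sum_congr rfl fun j _ => ih j
        _ = (((n + 1 + (i : ℕ)).choose (i : ℕ) : ℤ)) := by
            rw [← Nat.cast_sum]
            exact_mod_cast congrArg (Nat.cast (R := ℤ)) (sum_Iic_choose n i)

lemma norm_iter (n : ℕ) (i : Fin k) :
    FreeGroup.norm ((⇑(polyPhi k))^[n] (FreeGroup.of i)) = (n + (i : ℕ)).choose (i : ℕ) := by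
  refine le_antisymm (norm_iter_le n i) ?_
  have h := toAdd_expSum_le_norm ((⇑(polyPhi k))^[n] (FreeGroup.of i))
  rw [expSum_iter] at h
  exact_mod_cast h

lemma ascFactorial_le_succ (n j : ℕ) : n.ascFactorial j ≤ (n + 1).ascFactorial j := by
  induction j with
  | zero => simp
  | succ j ih =>
      rw [Nat.ascFactorial_succ, Nat.ascFactorial_succ]
      exact Nat.mul_le_mul (by omega) ih

lemma pow_le_choose_mul_factorial (n j : ℕ) :
    n ^ j ≤ (n + j).choose j * Nat.factorial j := by
  calc n ^ j ≤ n.ascFactorial j := Nat.pow_succ_le_ascFactorial n j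
    _ ≤ (n + 1).ascFactorial j := ascFactorial_le_succ n j
    _ = Nat.factorial j * (n + j).choose j := Nat.ascFactorial_eq_factorial_mul_choose n j
    _ = (n + j).choose j * Nat.factorial j := Nat.mul_comm _ _

lemma choose_le_pow_mul (n j : ℕ) (hn : 1 ≤ n) :
    (n + j).choose j ≤ (j + 1) ^ j * n ^ j := by
  have h1 : (n + j).choose j ≤ (n + j).choose j * Nat.factorial j :=
    Nat.le_mul_of_pos_right _ (Nat.factorial_pos j)
  have h2 : (n + j).choose j * Nat.factorial j = (n + 1).ascFactorial j :=
    ((Nat.ascFactorial_eq_factorial_mul_choose n j).trans (Nat.mul_comm _ _)).symm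
  have h3 : (n + 1).ascFactorial j ≤ (n + j) ^ j := Nat.ascFactorial_le_pow_add n j
  have h4 : (n + j) ^ j ≤ ((j + 1) * n) ^ j := by
    apply Nat.pow_le_pow_left
    calc n + j ≤ n + j * n := by
          have : j ≤ j * n := Nat.le_mul_of_pos_right _ hn
          omega
      _ = (j + 1) * n := by ring
  calc (n + j).choose j ≤ (n + j) ^ j := by omega
    _ ≤ ((j + 1) * n) ^ j := h4
    _ = (j + 1) ^ j * n ^ j := Nat.mul_pow _ _ _

end PolyPhiGrowth

/-- For the automorphism `φ` of `F_k` with `φ(x₁)=x₁`, `φ(x_i)=x₁⋯x_i`, the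
word length of `φⁿ(x_i)` grows polynomially of degree exactly `i−1` in `n`: one has
`|φⁿ(x₁)| = 1` for all `n`, and for each generator (indexed by `i : Fin k`, the generator
`x_{i+1}` of degree `(i : ℕ)`) there are positive constants `c₁, c₂` with
`c₁·n^{i} ≤ |φⁿ(x_{i+1})| ≤ c₂·n^{i}` for all `n ≥ 1`. -/
theorem polyPhi_growth (k : ℕ) (hk : 0 < k) :
    (∀ n : ℕ, FreeGroup.norm ((⇑(polyPhi k))^[n] (FreeGroup.of (⟨0, hk⟩ : Fin k))) = 1) ∧
    (∀ i : Fin k, ∃ c₁ c₂ : ℝ, 0 < c₁ ∧ 0 < c₂ ∧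
      ∀ n : ℕ, 1 ≤ n →
        c₁ * (n : ℝ) ^ (i : ℕ) ≤
            (FreeGroup.norm ((⇑(polyPhi k))^[n] (FreeGroup.of i)) : ℝ) ∧
          (FreeGroup.norm ((⇑(polyPhi k))^[n] (FreeGroup.of i)) : ℝ) ≤
            c₂ * (n : ℝ) ^ (i : ℕ)) := by
  constructor
  · intro n
    rw [PolyPhiGrowth.norm_iter]
    simp
  · intro i
    set j : ℕ := (i : ℕ) with hj
    refine ⟨1 / (Nat.factorial j : ℝ), ((j : ℝ) + 1) ^ j, by positivity, by positivity, ?_⟩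
    intro n hn
    rw [PolyPhiGrowth.norm_iter]
    constructor
    · rw [div_mul_eq_mul_div, one_mul, div_le_iff₀ (by positivity)]
      have := PolyPhiGrowth.pow_le_choose_mul_factorial n j
      exact_mod_cast this
    · have := PolyPhiGrowth.choose_le_pow_mul n j hn
      calc ((n + j).choose j : ℝ) ≤ ((j + 1) ^ j * n ^ j : ℕ) := by exact_mod_cast this
        _ = ((j : ℝ) + 1) ^ j * (n : ℝ) ^ j := by push_cast; ring
end
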